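/- Let A be a Banach space, T : A → A** a bounded linear operator, and T̂ = (T* ∘ κ_{A*})* its canonical extension to A**. If A is an ordered Banach space and T ≥ 0 (i.e., T a ≥ 0 in A** for every a ≥ 0 in A, where positivity in A** means nonnegativity on positive functionals), then T̂ ≥ 0. -/

import Mathlib

open NormedSpace

set_option maxHeartbeats 2000000

/-- The dual (adjoint) of a bounded operator `S : E → F`, as a bounded operator
`Dual ℝ F → Dual ℝ E`, `g ↦ g ∘ S`. -/
noncomputable def dualOp {E F : Type*} [SeminormedAddCommGroup E] [NormedSpace ℝ E]
    [SeminormedAddCommGroup F] [NormedSpace ℝ F] (S : E →L[ℝ] F) :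
    StrongDual ℝ F →L[ℝ] StrongDual ℝ E :=
  (ContinuousLinearMap.compL ℝ E F ℝ).flip S

/-- For `T : A → A**`, the operator `T̂ = (T* ∘ κ_{A*})* : A** → A**`. -/
noncomputable def hatOp {A : Type*} [NormedAddCommGroup A] [NormedSpace ℝ A]
    (T : A →L[ℝ] StrongDual ℝ (StrongDual ℝ A)) :
    StrongDual ℝ (StrongDual ℝ A) →L[ℝ] StrongDual ℝ (StrongDual ℝ A) :=
  dualOp ((dualOp T) ∘L inclusionInDoubleDual ℝ (StrongDual ℝ A))

/-- A functional `φ ∈ A*` is positive if `φ a ≥ 0` for every `a ≥ 0` in `A`. -/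
def IsPosFunctional {A : Type*} [NormedAddCommGroup A] [NormedSpace ℝ A]
    [PartialOrder A] (φ : StrongDual ℝ A) : Prop :=
  ∀ a : A, 0 ≤ a → 0 ≤ φ a

/-- An element `Φ ∈ A**` is positive if it is nonnegative on every positive functional. -/
def IsPosBidual {A : Type*} [NormedAddCommGroup A] [NormedSpace ℝ A]
    [PartialOrder A] (Φ : StrongDual ℝ (StrongDual ℝ A)) : Prop :=
  ∀ φ : StrongDual ℝ A, IsPosFunctional φ → 0 ≤ Φ φ

/-- If `A` is an ordered Banach space (with closed positive cone) and `T : A → A**`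
satisfies `T ≥ 0` (i.e. `T a` is positive in `A**` for every `a ≥ 0`), then the canonical
extension `T̂ = (T* ∘ κ_{A*})* : A** → A**` satisfies `T̂ ≥ 0`. -/
theorem stmt3 {A : Type*} [NormedAddCommGroup A] [NormedSpace ℝ A] [CompleteSpace A]
    [PartialOrder A] (hcone : IsClosed {a : A | 0 ≤ a})
    (T : A →L[ℝ] StrongDual ℝ (StrongDual ℝ A))
    (hT : ∀ a : A, 0 ≤ a → IsPosBidual (T a)) :
    ∀ Φ : StrongDual ℝ (StrongDual ℝ A), IsPosBidual Φ → IsPosBidual (hatOp T Φ) := by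
  intro Φ hΦ φ hφ
  exact hΦ _ (fun a ha => hT a ha φ hφ)
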